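/- Let ζ ∈ R^E with E ≥ 1, let P, μ > 0, and let M, N, m, n', k > 0 with k·m < 1, k·n' > 1. Then Σ_{i=1}^E P·|ζ_i|·(M|ζ_i|^m + N|ζ_i|^{n'})^k ≥ E·P·s̄·(M·s̄^m + N·s̄^{n'})^k, where s̄ = (1/E)·Σ_{i=1}^E |ζ_i|. -/

import Mathlib

set_option maxHeartbeats 1000000

open Set Real

private lemma jaa_convex_aux (M N m n k : ℝ) (hM : 0 < M) (hN : 0 < N)
    (hm : 0 < m) (hn : 0 < n) (hk : 0 < k) :
    ConvexOn ℝ (Set.Ici (0:ℝ)) (fun x : ℝ => x * (M * x ^ m + N * x ^ n) ^ k) := by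
  have hD : interior (Set.Ici (0:ℝ)) = Set.Ioi 0 := interior_Ici
  set g : ℝ → ℝ := fun x => M * x ^ m + N * x ^ n with hgdef
  set gp : ℝ → ℝ := fun x => M * (m * x ^ (m-1)) + N * (n * x ^ (n-1)) with hgpdef
  set gpp : ℝ → ℝ := fun x => M * (m * ((m-1) * x ^ (m-2))) + N * (n * ((n-1) * x ^ (n-2)))
    with hgppdef
  have hgpos : ∀ x : ℝ, 0 < x → 0 < g x := fun x hx =>
    add_pos (mul_pos hM (rpow_pos_of_pos hx m)) (mul_pos hN (rpow_pos_of_pos hx n))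
  have hgder : ∀ x : ℝ, 0 < x → HasDerivAt g (gp x) x := fun x hx =>
    ((Real.hasDerivAt_rpow_const (Or.inl hx.ne')).const_mul M).add
      ((Real.hasDerivAt_rpow_const (Or.inl hx.ne')).const_mul N)
  apply convexOn_of_hasDerivWithinAt2_nonneg (convex_Ici 0)
    (f' := fun x => g x ^ k + x * (k * g x ^ (k-1) * gp x))
    (f'' := fun x => 2 * (k * g x ^ (k-1) * gp x)
      + x * ((k-1) * g x ^ (k-2) * gp x ^ 2 * k + k * g x ^ (k-1) * gpp x))
  · -- continuity
    have h1 : Continuous g :=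
      (continuous_const.mul (Real.continuous_rpow_const hm.le)).add
        (continuous_const.mul (Real.continuous_rpow_const hn.le))
    exact (continuous_id.mul (h1.rpow_const fun x => Or.inr hk.le)).continuousOn
  · -- first derivative
    rw [hD]
    intro x hx
    have hx : 0 < x := hx
    have hgk : HasDerivAt (fun x => g x ^ k) (gp x * k * g x ^ (k-1)) x :=
      (hgder x hx).rpow_const (Or.inl (hgpos x hx).ne')
    have h := (hasDerivAt_id x).fun_mul hgk
    have h2 : HasDerivAt (fun x => x * g x ^ k)
        (g x ^ k + x * (k * g x ^ (k-1) * gp x)) x := by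
      exact h.congr_deriv (by simp only [id_eq]; ring)
    exact h2.hasDerivWithinAt
  · -- second derivative
    rw [hD]
    intro x hx
    have hx : 0 < x := hx
    have hgne := (hgpos x hx).ne'
    have hgk1 : HasDerivAt (fun x => g x ^ (k-1)) (gp x * (k-1) * g x ^ (k-1-1)) x :=
      (hgder x hx).rpow_const (Or.inl hgne)
    have hgpder : HasDerivAt gp
        (M * (m * ((m-1) * x ^ (m-1-1))) + N * (n * ((n-1) * x ^ (n-1-1)))) x :=
      (((Real.hasDerivAt_rpow_const (Or.inl hx.ne')).const_mul m).const_mul M).add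
        (((Real.hasDerivAt_rpow_const (Or.inl hx.ne')).const_mul n).const_mul N)
    have hgk : HasDerivAt (fun x => g x ^ k) (gp x * k * g x ^ (k-1)) x :=
      (hgder x hx).rpow_const (Or.inl hgne)
    have hin : HasDerivAt (fun x => k * g x ^ (k-1) * gp x)
        ((k * (gp x * (k-1) * g x ^ (k-1-1))) * gp x
          + (k * g x ^ (k-1)) * (M * (m * ((m-1) * x ^ (m-1-1)))
            + N * (n * ((n-1) * x ^ (n-1-1))))) x :=
      (hgk1.const_mul k).mul hgpder
    have h := hgk.add ((hasDerivAt_id x).fun_mul hin)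
    have e1 : m - 1 - 1 = m - 2 := by ring
    have e2 : n - 1 - 1 = n - 2 := by ring
    have e3 : k - 1 - 1 = k - 2 := by ring
    rw [e1, e2, e3] at h
    have h2 : HasDerivAt (fun x => g x ^ k + x * (k * g x ^ (k-1) * gp x))
        (2 * (k * g x ^ (k-1) * gp x)
          + x * ((k-1) * g x ^ (k-2) * gp x ^ 2 * k + k * g x ^ (k-1) * gpp x)) x := by
      exact h.congr_deriv (by simp only [id_eq, hgppdef]; ring)
    exact h2.hasDerivWithinAt
  · -- nonnegativity of the second derivative
    rw [hD]
    intro x hx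
    have hx : 0 < x := hx
    set a := x ^ m with ha'
    set b := x ^ n with hb'
    have ha : 0 < a := rpow_pos_of_pos hx m
    have hb : 0 < b := rpow_pos_of_pos hx n
    have hG : 0 < g x := hgpos x hx
    set c := g x ^ (k-2) with hc'
    have hc : 0 < c := rpow_pos_of_pos hG _
    have hxm1 : x ^ (m-1) = a / x := by
      rw [ha', Real.rpow_sub hx, Real.rpow_one]
    have hxn1 : x ^ (n-1) = b / x := by
      rw [hb', Real.rpow_sub hx, Real.rpow_one]
    have hxm2 : x ^ (m-2) = a / x / x := by
      rw [show m - 2 = m - 1 - 1 by ring, Real.rpow_sub hx, Real.rpow_one, hxm1]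
    have hxn2 : x ^ (n-2) = b / x / x := by
      rw [show n - 2 = n - 1 - 1 by ring, Real.rpow_sub hx, Real.rpow_one, hxn1]
    have hgk1 : g x ^ (k-1) = c * g x := by
      rw [hc', show k - 1 = (k-2) + 1 by ring, Real.rpow_add hG, Real.rpow_one]
    have hgval : g x = M * a + N * b := rfl
    have hgpval : gp x = (M * (m * a) + N * (n * b)) / x := by
      show M * (m * x ^ (m-1)) + N * (n * x ^ (n-1)) = _
      rw [hxm1, hxn1]
      field_simp
    have hgppval : gpp x = (M * (m * ((m-1) * a)) + N * (n * ((n-1) * b))) / (x * x) := by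
      show M * (m * ((m-1) * x ^ (m-2))) + N * (n * ((n-1) * x ^ (n-2))) = _
      rw [hxm2, hxn2]
      field_simp
      try ring
    show 0 ≤ 2 * (k * g x ^ (k-1) * gp x)
      + x * ((k-1) * g x ^ (k-2) * gp x ^ 2 * k + k * g x ^ (k-1) * gpp x)
    rw [hgk1, hgpval, hgppval, ← hc', hgval]
    have key : 2 * (k * (c * (M * a + N * b)) * ((M * (m * a) + N * (n * b)) / x))
        + x * ((k-1) * c * ((M * (m * a) + N * (n * b)) / x) ^ 2 * k
          + k * (c * (M * a + N * b)) * ((M * (m * ((m-1) * a)) + N * (n * ((n-1) * b))) / (x * x)))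
        = (k * c / x) * (m * (k*m+1) * (M*a)^2
            + ((m-n)^2 + 2*k*m*n + m + n) * ((M*a) * (N*b)) + n * (k*n+1) * (N*b)^2) := by
      field_simp
      ring
    have hR : 0 ≤ m * (k*m+1) * (M*a)^2 + ((m-n)^2 + 2*k*m*n + m + n) * ((M*a) * (N*b))
        + n * (k*n+1) * (N*b)^2 := by
      have hA : 0 < M * a := mul_pos hM ha
      have hB : 0 < N * b := mul_pos hN hb
      have t1 : 0 ≤ m * (k*m+1) * (M*a)^2 :=
        mul_nonneg (mul_nonneg hm.le (by nlinarith)) (sq_nonneg _)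
      have t2 : 0 ≤ ((m-n)^2 + 2*k*m*n + m + n) * ((M*a) * (N*b)) :=
        mul_nonneg (by nlinarith [sq_nonneg (m-n), mul_pos (mul_pos hk hm) hn])
          (mul_nonneg hA.le hB.le)
      have t3 : 0 ≤ n * (k*n+1) * (N*b)^2 :=
        mul_nonneg (mul_nonneg hn.le (by nlinarith)) (sq_nonneg _)
      linarith
    have hfac : 0 ≤ (k * c / x) * (m * (k*m+1) * (M*a)^2
        + ((m-n)^2 + 2*k*m*n + m + n) * ((M*a) * (N*b)) + n * (k*n+1) * (N*b)^2) :=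
      mul_nonneg (div_nonneg (mul_nonneg hk.le hc.le) hx.le) hR
    linarith [key, hfac]

/-- Application of the Jensen-type inequality to s_i = |ζ_i|:
Σ_i P·|ζ_i|·(M|ζ_i|^m + N|ζ_i|^{n'})^k ≥ E·P·s̄·(M s̄^m + N s̄^{n'})^k with
s̄ the mean of the |ζ_i|. -/
theorem jensen_applied_abs (E : ℕ) (hE : 1 ≤ E) (ζ : Fin E → ℝ)
    (P μ : ℝ) (hP : 0 < P) (hμ : 0 < μ)
    (M N m n' k : ℝ) (hM : 0 < M) (hN : 0 < N) (hm : 0 < m) (hn' : 0 < n') (hk : 0 < k)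
    (hkm : k * m < 1) (hkn : 1 < k * n') :
    (E : ℝ) * P * ((1 / (E : ℝ)) * ∑ i, |ζ i|) *
        (M * ((1 / (E : ℝ)) * ∑ i, |ζ i|) ^ m + N * ((1 / (E : ℝ)) * ∑ i, |ζ i|) ^ n') ^ k
      ≤ ∑ i, P * |ζ i| * (M * |ζ i| ^ m + N * |ζ i| ^ n') ^ k := by
  have hE0 : (0:ℝ) < (E:ℝ) := by exact_mod_cast hE
  have hcvx := jaa_convex_aux M N m n' k hM hN hm hn' hk
  have hw : ∑ _i : Fin E, (1 / (E:ℝ)) = 1 := by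
    simp [Finset.sum_const, Finset.card_fin]
    field_simp
  have hmem : ∀ i ∈ Finset.univ, |ζ i| ∈ Set.Ici (0:ℝ) := fun i _ => Set.mem_Ici.mpr (abs_nonneg _)
  have hj := hcvx.map_sum_le (t := Finset.univ) (w := fun _ => 1 / (E:ℝ))
    (p := fun i => |ζ i|) (fun i _ => by positivity) hw hmem
  simp only [smul_eq_mul] at hj
  rw [← Finset.mul_sum] at hj
  -- hj : s̄ * (M s̄^m + N s̄^n')^k ≤ ∑ (1/E) * (|ζi| * (...)^k)
  have h2 := mul_le_mul_of_nonneg_left hj (le_of_lt (mul_pos hE0 hP))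
  calc (E : ℝ) * P * ((1 / (E : ℝ)) * ∑ i, |ζ i|) *
        (M * ((1 / (E : ℝ)) * ∑ i, |ζ i|) ^ m + N * ((1 / (E : ℝ)) * ∑ i, |ζ i|) ^ n') ^ k
      = (E:ℝ) * P * (((1 / (E : ℝ)) * ∑ i, |ζ i|) *
        (M * ((1 / (E : ℝ)) * ∑ i, |ζ i|) ^ m + N * ((1 / (E : ℝ)) * ∑ i, |ζ i|) ^ n') ^ k) := by
        ring
    _ ≤ (E:ℝ) * P * ∑ i, (1 / (E:ℝ)) * (|ζ i| * (M * |ζ i| ^ m + N * |ζ i| ^ n') ^ k) := h2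
    _ = ∑ i, P * |ζ i| * (M * |ζ i| ^ m + N * |ζ i| ^ n') ^ k := by
        rw [Finset.mul_sum]
        apply Finset.sum_congr rfl
        intro i _
        field_simp
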